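/- Suppose $\sigma$ is a $K$-algebra endomorphism of $L$ such that $\sigma(X_n) = \dfrac{P_n}{X_{n-1} P_{n-2}}$ for all $n \in \mathbb{Z}/m\mathbb{Z}$. Then for every $n \in \mathbb{Z}/m\mathbb{Z}$ one has $\sigma(P_n) = P_{n-1} \cdot \dfrac{X_n}{\prod_{k \in \mathbb{Z}/m\mathbb{Z}} X_k}$. -/

import Mathlib

/- Setting: `Lm K m` is the field of fractions of the (Laurent) polynomial ring over a field
`K` in commuting variables `yv n` indexed by `n : ZMod m`, with fixed scalars `F n : K`. -/

noncomputable section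

variable (K : Type) [Field K] (m : ℕ) [NeZero m]

/-- The ambient field `L`. -/
abbrev Lm := FractionRing (MvPolynomial (ZMod m) K)

/-- The variable `y_n`. -/
def yv (n : ZMod m) : Lm K m :=
  algebraMap (MvPolynomial (ZMod m) K) (Lm K m) (MvPolynomial.X n)

variable (F : ZMod m → K)

/-- The scalar `F_n` viewed inside `L`. -/
def Fc (n : ZMod m) : Lm K m := algebraMap K (Lm K m) (F n)

/-- `X_n = F_n / (y_n y_{n+1})`. -/
def Xv (n : ZMod m) : Lm K m := Fc K m F n / (yv K m n * yv K m (n + 1))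

/-- `P_n = 1 + ∑_{k=0}^{m-2} X_n X_{n-1} ⋯ X_{n-k}`. -/
def Pv (n : ZMod m) : Lm K m :=
  1 + ∑ k ∈ Finset.range (m - 1), ∏ j ∈ Finset.range (k + 1), Xv K m F (n - (j : ZMod m))

/-- `z_n = y_n (1 + X_n)`. -/
def zv (n : ZMod m) : Lm K m := yv K m n * (1 + Xv K m F n)

/-- `𝐲 = ∏_n y_n`. -/
def boldy : Lm K m := ∏ n : ZMod m, yv K m n

/-- `𝐅 = ∏_n F_n` (viewed in `L`). -/
def boldF : Lm K m := ∏ n : ZMod m, Fc K m F n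

/-- `δ = 𝐲 - 𝐅/𝐲`. -/
def deltav : Lm K m := boldy K m - boldF K m F / boldy K m

namespace Stmt10Aux

open Finset

variable {K : Type} [Field K] {m : ℕ} [NeZero m] {F : ZMod m → K}

lemma prod_shift_univ {M : Type} [CommMonoid M] (f : ZMod m → M) (a : ZMod m) :
    ∏ k : ZMod m, f (k - a) = ∏ k : ZMod m, f k :=
  Fintype.prod_equiv (Equiv.subRight a) _ _ (fun _ => rfl)

lemma prod_range_shift {M : Type} [CommMonoid M] (f : ZMod m → M) (n : ZMod m) :
    ∏ j ∈ Finset.range m, f (n - (j : ZMod m)) = ∏ k : ZMod m, f k := by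
  refine Finset.prod_bij' (fun j _ => n - (j : ZMod m)) (fun k _ => (n - k).val) ?_ ?_ ?_ ?_ ?_
  · intros; exact Finset.mem_univ _
  · intro k _; exact Finset.mem_range.mpr (ZMod.val_lt _)
  · intro j hj
    simp only [ZMod.natCast_val, ZMod.cast_id, sub_sub_cancel]
    exact ZMod.val_cast_of_lt (Finset.mem_range.mp hj)
  · intro k _; simp [ZMod.natCast_val, ZMod.cast_id]
  · intro j _; rfl

lemma yv_ne_zero (n : ZMod m) : yv K m n ≠ 0 := by
  simpa [yv, map_eq_zero_iff _ (IsFractionRing.injective (MvPolynomial (ZMod m) K) (Lm K m))]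
    using MvPolynomial.X_ne_zero (R := K) n

lemma Xv_ne_zero (hF : ∀ n, F n ≠ 0) (n : ZMod m) : Xv K m F n ≠ 0 := by
  have hFc : Fc K m F n ≠ 0 := by
    simpa [Fc, map_eq_zero_iff _ (algebraMap K (Lm K m)).injective] using hF n
  exact div_ne_zero hFc (mul_ne_zero (yv_ne_zero n) (yv_ne_zero (n + 1)))

/-- The key recurrence `P_n = 1 + X_n P_{n-1} - 𝐗`. -/
lemma Pv_rec (n : ZMod m) :
    Pv K m F n = 1 + Xv K m F n * Pv K m F (n - 1) - ∏ k : ZMod m, Xv K m F k := by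
  have hm1 : m = (m - 1) + 1 := (Nat.succ_pred_eq_of_pos (NeZero.pos m)).symm
  have hr : Finset.range m = Finset.range ((m - 1) + 1) := by rw [← hm1]
  have hA : ∑ k ∈ Finset.range m, ∏ j ∈ Finset.range (k + 1), Xv K m F (n - (j : ZMod m))
      = Xv K m F n *
        (1 + ∑ k ∈ Finset.range (m - 1), ∏ j ∈ Finset.range (k + 1),
          Xv K m F ((n - 1) - (j : ZMod m))) := by
    rw [hr, Finset.sum_range_succ']
    have h0 : ∏ j ∈ Finset.range (0 + 1), Xv K m F (n - (j : ZMod m)) = Xv K m F n := by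
      simp
    rw [h0]
    have hterm : ∀ k : ℕ,
        ∏ j ∈ Finset.range ((k + 1) + 1), Xv K m F (n - (j : ZMod m))
          = Xv K m F n * ∏ j ∈ Finset.range (k + 1), Xv K m F ((n - 1) - (j : ZMod m)) := by
      intro k
      rw [Finset.prod_range_succ']
      have : ∀ j : ℕ, Xv K m F (n - ((j + 1 : ℕ) : ZMod m)) = Xv K m F ((n - 1) - (j : ZMod m)) := by
        intro j; congr 1; push_cast; ring
      rw [Finset.prod_congr rfl (fun j _ => this j)]
      simp [mul_comm]
    rw [Finset.sum_congr rfl (fun k _ => hterm k), ← Finset.mul_sum]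
    ring
  have hB : ∑ k ∈ Finset.range m, ∏ j ∈ Finset.range (k + 1), Xv K m F (n - (j : ZMod m))
      = (∑ k ∈ Finset.range (m - 1), ∏ j ∈ Finset.range (k + 1), Xv K m F (n - (j : ZMod m)))
        + ∏ k : ZMod m, Xv K m F k := by
    rw [hr, Finset.sum_range_succ]
    congr 1
    rw [← hm1]
    exact prod_range_shift _ n
  have h := hA.symm.trans hB
  unfold Pv
  linear_combination -h

/-- `𝐗 ≠ 1`. -/
lemma prod_Xv_ne_one (hF : ∀ n, F n ≠ 0) : (∏ k : ZMod m, Xv K m F k) ≠ 1 := by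
  intro h
  have hinj := IsFractionRing.injective (MvPolynomial (ZMod m) K) (Lm K m)
  have hsplit : (∏ k : ZMod m, Xv K m F k)
      = algebraMap (MvPolynomial (ZMod m) K) (Lm K m) (MvPolynomial.C (∏ k : ZMod m, F k))
        / algebraMap (MvPolynomial (ZMod m) K) (Lm K m)
          (∏ k : ZMod m, (MvPolynomial.X k * MvPolynomial.X (k + 1))) := by
    simp only [Xv, Fc, yv]
    rw [Finset.prod_div_distrib]
    congr 1
    · rw [show (MvPolynomial.C (∏ k : ZMod m, F k) : MvPolynomial (ZMod m) K)
          = ∏ k : ZMod m, MvPolynomial.C (F k) from map_prod _ _ _, map_prod]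
      apply Finset.prod_congr rfl
      intro k _
      rw [IsScalarTower.algebraMap_apply K (MvPolynomial (ZMod m) K) (Lm K m),
        MvPolynomial.algebraMap_eq]
    · rw [map_prod]
      apply Finset.prod_congr rfl
      intro k _
      rw [map_mul]
  have hpne : (∏ k : ZMod m, (MvPolynomial.X k * MvPolynomial.X (k + 1)) :
      MvPolynomial (ZMod m) K) ≠ 0 :=
    Finset.prod_ne_zero_iff.mpr fun k _ =>
      mul_ne_zero (MvPolynomial.X_ne_zero k) (MvPolynomial.X_ne_zero (k + 1))
  rw [hsplit, div_eq_one_iff_eq ((map_ne_zero_iff _ hinj).mpr hpne)] at h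
  have h2 := hinj h
  have h3 := congrArg MvPolynomial.constantCoeff h2
  rw [MvPolynomial.constantCoeff_C, map_prod] at h3
  have h4 : (∏ k : ZMod m, MvPolynomial.constantCoeff
      (MvPolynomial.X k * MvPolynomial.X (k + 1) : MvPolynomial (ZMod m) K)) = 0 :=
    Finset.prod_eq_zero (Finset.mem_univ 0) (by simp)
  rw [h4] at h3
  exact Finset.prod_ne_zero_iff.mpr (fun k _ => hF k) h3

end Stmt10Aux

set_option maxHeartbeats 1600000
/-- if `σ` is a `K`-algebra endomorphism of `L` with
`σ(X_n) = P_n/(X_{n-1} P_{n-2})` for all `n`, then `σ(P_n) = P_{n-1} · X_n / ∏_k X_k`. -/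
theorem stmt_10 (hm : 2 ≤ m) (hF : ∀ n, F n ≠ 0)
    (σ : Lm K m →ₐ[K] Lm K m)
    (hσ : ∀ n : ZMod m, σ (Xv K m F n) = Pv K m F n / (Xv K m F (n - 1) * Pv K m F (n - 2))) :
    ∀ n : ZMod m,
      σ (Pv K m F n) = Pv K m F (n - 1) * (Xv K m F n / ∏ k : ZMod m, Xv K m F k) := by
  intro n
  set XX := ∏ k : ZMod m, Xv K m F k with hXXdef
  have hX : ∀ k, Xv K m F k ≠ 0 := Stmt10Aux.Xv_ne_zero hF
  have hσinj : Function.Injective σ := σ.toRingHom.injective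
  have hσX : ∀ k, σ (Xv K m F k) ≠ 0 := fun k h => hX k (hσinj (by simpa using h))
  have hP : ∀ k, Pv K m F k ≠ 0 := by
    intro k hk
    exact hσX k (by rw [hσ k, hk, zero_div])
  have hXXne : XX ≠ 0 := Finset.prod_ne_zero_iff.mpr fun k _ => hX k
  have hXX1 : XX ≠ 1 := Stmt10Aux.prod_Xv_ne_one hF
  have hPprod : (∏ k : ZMod m, Pv K m F k) ≠ 0 := Finset.prod_ne_zero_iff.mpr fun k _ => hP k
  -- σ(XX) = 1/XX
  have hσXX : σ XX = 1 / XX := by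
    rw [hXXdef, map_prod, Finset.prod_congr rfl (fun k _ => hσ k), Finset.prod_div_distrib,
      Finset.prod_mul_distrib,
      Stmt10Aux.prod_shift_univ (fun k => Xv K m F k) 1,
      Stmt10Aux.prod_shift_univ (fun k => Pv K m F k) 2, mul_comm, ← div_div,
      div_self hPprod, ← hXXdef]
  -- recurrence transported by σ
  have hrecσ : ∀ k : ZMod m, σ (Pv K m F k)
      = 1 + σ (Xv K m F k) * σ (Pv K m F (k - 1)) - 1 / XX := by
    intro k
    have h := congrArg σ (Stmt10Aux.Pv_rec (F := F) k)
    rw [map_sub, map_add, map_one, map_mul, ← hXXdef, hσXX] at h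
    exact h
  set Q : ZMod m → Lm K m := fun k => Pv K m F (k - 1) * (Xv K m F k / XX) with hQdef
  -- Q satisfies the same recurrence
  have hrecQ : ∀ k : ZMod m, Q k = 1 + σ (Xv K m F k) * Q (k - 1) - 1 / XX := by
    intro k
    have hrec := Stmt10Aux.Pv_rec (K := K) (m := m) (F := F) k
    rw [← hXXdef] at hrec
    have e : (k : ZMod m) - 1 - 1 = k - 2 := by ring
    simp only [hQdef, e]
    rw [hσ k]
    field_simp [hX (k-1), hP (k-2), hXXne]
    linear_combination -hrec
  have hd : ∀ k : ZMod m, σ (Pv K m F k) - Q k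
      = σ (Xv K m F k) * (σ (Pv K m F (k - 1)) - Q (k - 1)) := by
    intro k; rw [hrecσ k, hrecQ k]; ring
  have key : ∀ t : ℕ, σ (Pv K m F n) - Q n
      = (∏ j ∈ Finset.range t, σ (Xv K m F (n - (j : ZMod m))))
        * (σ (Pv K m F (n - (t : ZMod m))) - Q (n - (t : ZMod m))) := by
    intro t
    induction t with
    | zero => simp only [Finset.prod_range_zero, one_mul, Nat.cast_zero, sub_zero]
    | succ t ih =>
      rw [ih, Finset.prod_range_succ, hd (n - (t : ZMod m))]
      have e : (n : ZMod m) - (t : ZMod m) - 1 = n - ((t + 1 : ℕ) : ZMod m) := by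
        push_cast; ring
      rw [e]; ring
  have hfin := key m
  rw [ZMod.natCast_self, sub_zero] at hfin
  rw [Stmt10Aux.prod_range_shift (fun k => σ (Xv K m F k)) n] at hfin
  have h3 := hσXX
  rw [hXXdef, map_prod, ← hXXdef] at h3
  rw [h3] at hfin
  have h2 := congrArg (fun z => XX * z) hfin
  rw [← mul_assoc, mul_one_div, div_self hXXne, one_mul] at h2
  have hzero : (σ (Pv K m F n) - Q n) * (XX - 1) = 0 := by
    linear_combination h2
  rcases mul_eq_zero.mp hzero with h | h
  · rw [sub_eq_zero] at h
    rw [h]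
  · exact absurd h (sub_ne_zero.mpr hXX1)
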